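/- (Generalized Fisher–Jerome theorem, existence part.) Let N be a finite-dimensional normed real vector space and let H = M(ℝ^d) × N, equipped with the norm ‖(w,p)‖_H = ‖w‖_M + ‖p‖_N and the product of the weak* topology on M(ℝ^d) and the norm topology on N. Let F : H → ℝ^M (with M ≥ dim N) be a linear map that is continuous for this topology and satisfies B‖p‖_N ≤ ‖F(0,p)‖₂ for some constant B > 0 and all p ∈ N. Let C ⊂ ℝ^M be a convex compact set such that U = F^{-1}(C) is nonempty. Then the set V = argmin_{(w,p) ∈ U} ‖w‖_M of minimizers is a nonempty, convex, weak*-compact subset of H. -/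

import Mathlib

open MeasureTheory ZeroAtInfty

/-- `M(ℝ^d)`, realized via the Riesz–Markov theorem as the continuous dual of
`C₀(ℝ^d, ℝ)`, endowed with its weak* topology. -/
abbrev MeasSpace (d : ℕ) := WeakDual ℝ C₀(EuclideanSpace ℝ (Fin d), ℝ)

/-- The total-variation norm `‖·‖_M`, i.e. the dual norm on `(C₀(ℝ^d,ℝ))'`. -/
noncomputable def mNorm {d : ℕ} (w : MeasSpace d) : ℝ := ‖WeakDual.toStrongDual w‖

/-- **generalized Fisher–Jerome theorem, existence part.**
Let `N` be a finite-dimensional normed real space, `H = M(ℝ^d) × N` with the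
product of the weak* topology and the norm topology, `F : H → ℝ^M` (with
`M ≥ dim N`) linear and continuous for this topology, satisfying
`B ‖p‖_N ≤ ‖F(0,p)‖₂` for some `B > 0` and all `p ∈ N`. If `C ⊂ ℝ^M` is convex
and compact with `U = F⁻¹(C)` nonempty, then the set `V` of minimizers of
`‖w‖_M` over `U` is nonempty, convex, and weak*-compact. -/
theorem fisherJerome_existence
    (d M : ℕ) (N : Type*) [NormedAddCommGroup N] [NormedSpace ℝ N]
    [FiniteDimensional ℝ N] (hdim : Module.finrank ℝ N ≤ M)
    (F : (MeasSpace d × N) →L[ℝ] EuclideanSpace ℝ (Fin M))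
    (B : ℝ) (hB : 0 < B) (hlow : ∀ p : N, B * ‖p‖ ≤ ‖F (0, p)‖)
    (C : Set (EuclideanSpace ℝ (Fin M))) (hCconv : Convex ℝ C) (hCcomp : IsCompact C)
    (U : Set (MeasSpace d × N)) (hU : U = F ⁻¹' C) (hUne : U.Nonempty)
    (V : Set (MeasSpace d × N))
    (hV : V = {u ∈ U | ∀ v ∈ U, mNorm u.1 ≤ mNorm v.1}) :
    V.Nonempty ∧ Convex ℝ V ∧ IsCompact V := by
  classical
  obtain ⟨u0, hu0⟩ := hUne
  set f : MeasSpace d × N → ℝ := fun u => mNorm u.1 with hf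
  have hUcl : IsClosed U := hU ▸ hCcomp.isClosed.preimage F.continuous
  have hUconv : Convex ℝ U := hU ▸ hCconv.linear_preimage (F : (MeasSpace d × N) →ₗ[ℝ] _)
  -- sublevel sets of f are closed
  have hsubcl : ∀ c : ℝ, IsClosed {u : MeasSpace d × N | f u ≤ c} := by
    intro c
    have h1 : IsCompact (WeakDual.toStrongDual ⁻¹' Metric.closedBall 0 c :
        Set (MeasSpace d)) := WeakDual.isCompact_closedBall (𝕜 := ℝ) 0 c
    have h2 : {u : MeasSpace d × N | f u ≤ c}
        = Prod.fst ⁻¹' (WeakDual.toStrongDual ⁻¹' Metric.closedBall 0 c) := by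
      ext u
      simp [hf, mNorm, Metric.mem_closedBall, dist_zero_right (WeakDual.toStrongDual u.1)]
    rw [h2]
    exact h1.isClosed.preimage continuous_fst
  -- sublevel sets of f are convex
  have hsubconv : ∀ c : ℝ, Convex ℝ {u : MeasSpace d × N | f u ≤ c} := by
    intro c u hu v hv a b ha hb hab
    have h1 : ((a • u + b • v).1 : MeasSpace d) = a • u.1 + b • v.1 := rfl
    have : f (a • u + b • v) ≤ a * f u + b * f v := by
      simp only [hf, mNorm, h1, map_add, _root_.map_smul]
      calc ‖a • WeakDual.toStrongDual u.1 + b • WeakDual.toStrongDual v.1‖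
          ≤ ‖a • WeakDual.toStrongDual u.1‖ + ‖b • WeakDual.toStrongDual v.1‖ :=
            norm_add_le (a • WeakDual.toStrongDual u.1) (b • WeakDual.toStrongDual v.1)
        _ = a * ‖WeakDual.toStrongDual u.1‖ + b * ‖WeakDual.toStrongDual v.1‖ := by
            rw [@norm_smul _ _ _ _ _ NormedSpace.toNormSMulClass a (WeakDual.toStrongDual u.1), @norm_smul _ _ _ _ _ NormedSpace.toNormSMulClass b (WeakDual.toStrongDual v.1), Real.norm_of_nonneg ha, Real.norm_of_nonneg hb]
    have hu' : f u ≤ c := hu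
    have hv' : f v ≤ c := hv
    have : f (a • u + b • v) ≤ c := by
      calc f (a • u + b • v) ≤ a * f u + b * f v := this
        _ ≤ a * c + b * c := by
            gcongr
        _ = c := by rw [← add_mul, hab, one_mul]
    exact this
  set t0 : ℝ := f u0 with ht0
  set S : Set (MeasSpace d) := WeakDual.toStrongDual ⁻¹' Metric.closedBall 0 t0 with hS
  have hScomp : IsCompact S := WeakDual.isCompact_closedBall (𝕜 := ℝ) 0 t0
  have hmemS : ∀ w : MeasSpace d, mNorm w ≤ t0 → w ∈ S := by
    intro w hw
    simp [hS, Metric.mem_closedBall, dist_zero_right (WeakDual.toStrongDual w)]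
    exact hw
  -- bound on ‖F (w, 0)‖ for w ∈ S
  have hφc : Continuous (fun w : MeasSpace d => ‖F (w, (0 : N))‖) := by
    exact continuous_norm.comp (F.continuous.comp (continuous_id.prodMk continuous_const))
  obtain ⟨w1, hw1S, hw1max⟩ := hScomp.exists_isMaxOn ⟨u0.1, hmemS u0.1 le_rfl⟩ hφc.continuousOn
  set R₁ : ℝ := ‖F (w1, (0 : N))‖ with hR₁
  -- bound on ‖c‖ for c ∈ C
  have hCne : C.Nonempty := ⟨F u0, by rw [hU] at hu0; exact hu0⟩
  obtain ⟨c1, hc1C, hc1max⟩ := hCcomp.exists_isMaxOn hCne continuous_norm.continuousOn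
  set R₂ : ℝ := ‖c1‖ with hR₂
  set R : ℝ := (R₁ + R₂) / B with hRdef
  -- the key coercivity bound
  have hpbound : ∀ u ∈ U, f u ≤ t0 → ‖u.2‖ ≤ R := by
    intro u huU hfu
    have huC : F u ∈ C := by rw [hU] at huU; exact huU
    have hFu : ‖F u‖ ≤ R₂ := hc1max huC
    have hFw : ‖F (u.1, (0 : N))‖ ≤ R₁ := hw1max (hmemS u.1 hfu)
    have hsplit : F ((0 : MeasSpace d), u.2) = F u - F (u.1, (0 : N)) := by
      rw [← map_sub]
      congr 1
      ext <;> simp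
    have : B * ‖u.2‖ ≤ R₁ + R₂ := by
      calc B * ‖u.2‖ ≤ ‖F ((0 : MeasSpace d), u.2)‖ := hlow u.2
        _ = ‖F u - F (u.1, (0 : N))‖ := by rw [hsplit]
        _ ≤ ‖F u‖ + ‖F (u.1, (0 : N))‖ := norm_sub_le _ _
        _ ≤ R₂ + R₁ := add_le_add hFu hFw
        _ = R₁ + R₂ := add_comm _ _
    rw [hRdef, le_div_iff₀ hB]
    linarith [this]
  set K : Set (MeasSpace d × N) := U ∩ (S ×ˢ Metric.closedBall 0 R) with hK
  have hKcomp : IsCompact K :=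
    ((hScomp.prod (isCompact_closedBall (0 : N) R)).inter_left hUcl)
  have hmemK : ∀ u ∈ U, f u ≤ t0 → u ∈ K := by
    intro u huU hfu
    refine ⟨huU, Set.mem_prod.2 ⟨hmemS u.1 hfu, ?_⟩⟩
    simpa [Metric.mem_closedBall, dist_zero_right] using hpbound u huU hfu
  have hu0K : u0 ∈ K := hmemK u0 hu0 le_rfl
  -- existence of minimizer on K via compactness
  obtain ⟨x, hxK, hxmin⟩ : ∃ x ∈ K, ∀ y ∈ K, f x ≤ f y := by
    haveI : Nonempty K := ⟨⟨u0, hu0K⟩⟩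
    set t : K → Set (MeasSpace d × N) := fun y => K ∩ {u | f u ≤ f y.1} with ht
    have hne : ∀ y, (t y).Nonempty := fun y => ⟨y.1, y.2, le_refl (f y.1)⟩
    have hcp : ∀ y, IsCompact (t y) := fun y => hKcomp.inter_right (hsubcl _)
    have hcl : ∀ y, IsClosed (t y) := fun y => hKcomp.isClosed.inter (hsubcl _)
    have hdir : Directed (· ⊇ ·) t := by
      intro y z
      rcases le_total (f y.1) (f z.1) with h | h
      · exact ⟨y, fun u hu => hu, fun u hu => ⟨hu.1, hu.2.trans h⟩⟩
      · exact ⟨z, fun u hu => ⟨hu.1, hu.2.trans h⟩, fun u hu => hu⟩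
    obtain ⟨x, hx⟩ :=
      IsCompact.nonempty_iInter_of_directed_nonempty_isCompact_isClosed t hdir hne hcp hcl
    simp only [Set.mem_iInter] at hx
    exact ⟨x, (hx ⟨u0, hu0K⟩).1, fun y hy => (hx ⟨y, hy⟩).2⟩
  -- x minimizes over all of U
  have hxU : x ∈ U := hxK.1
  have hxmin' : ∀ v ∈ U, f x ≤ f v := by
    intro v hv
    by_cases h : f v ≤ t0
    · exact hxmin v (hmemK v hv h)
    · exact (hxmin u0 hu0K).trans (le_of_not_ge h)
  have hxV : x ∈ V := hV ▸ ⟨hxU, hxmin'⟩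
  set m : ℝ := f x with hm
  have hVeq : V = U ∩ {u | f u ≤ m} := by
    rw [hV]
    ext u
    constructor
    · rintro ⟨huU, hmin⟩
      exact ⟨huU, hmin x hxU⟩
    · rintro ⟨huU, hum⟩
      exact ⟨huU, fun v hv => le_trans hum (hxmin' v hv)⟩
  have hVcl : IsClosed V := hVeq ▸ hUcl.inter (hsubcl m)
  have hVsubK : V ⊆ K := by
    intro u hu
    rw [hVeq] at hu
    exact hmemK u hu.1 (hu.2.trans (hxmin u0 hu0K))
  refine ⟨⟨x, hxV⟩, ?_, ?_⟩
  · rw [hVeq]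
    exact hUconv.inter (hsubconv m)
  · exact IsCompact.of_isClosed_subset hKcomp hVcl hVsubK
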